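/- Let p be a prime, n ≥ 2 and α_1,…,α_n ∈ ℂ. Let t : ℚ_p^× → GL_n(ℚ_p) be t(a) = diag(a,1,…,1). Suppose W : GL_n(ℚ_p) → ℂ satisfies: W(t(p^k)) = p^{−k(n−1)/2}·h_k(α) for every integer k ≥ 0; W(t(p^k)) = 0 for every integer k < 0; and W(t(a·u)) = W(t(a)) for every a ∈ ℚ_p^× and u ∈ ℤ_p^×. Let μ be a Haar measure on the locally compact group ℚ_p^× normalized so that μ(ℤ_p^×) = 1. Then for every real number s with |α_i| < p^s for all i, the function a ↦ W(t(a))·|a|_p^{s−(n−1)/2} is μ-integrable on ℚ_p^×, and ∫_{ℚ_p^×} W(t(a))·|a|_p^{s−(n−1)/2} dμ(a) = ∏_{i=1}^n (1 − α_i·p^{−s})^{−1}. -/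

import Mathlib

set_option maxHeartbeats 1000000


open MeasureTheory

/-!
The paper's dimension `n ≥ 2` is represented as `n + 1` with `n ≥ 1`, so matrices are
`(n+1) × (n+1)`, there are `n + 1` numbers `α_i`, and the exponents `−k(n−1)/2` and
`s − (n−1)/2` of the paper read `−k·n/2` and `s − n/2` here.
-/

/-- `ℚ_pˣ` is a locally compact topological group; equip it with its Borel σ-algebra. -/
noncomputable instance (p : ℕ) [Fact p.Prime] : MeasurableSpace ℚ_[p]ˣ := borel ℚ_[p]ˣ

/-- `t(a) = diag(a, 1, …, 1)`. -/
noncomputable def tMat (p : ℕ) [Fact p.Prime] (n : ℕ) (a : ℚ_[p]) :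
    Matrix (Fin (n + 1)) (Fin (n + 1)) ℚ_[p] :=
  Matrix.diagonal (fun i => if (i : ℕ) = 0 then a else 1)

/-- the complete homogeneous symmetric polynomial `h_k(α)` of degree `k`. -/
noncomputable def hpoly (n k : ℕ) (α : Fin (n + 1) → ℂ) : ℂ :=
  ∑ m ∈ Finset.Nat.antidiagonalTuple (n + 1) k, ∏ i, α i ^ m i

private def finConsEquiv (m : ℕ) : ℕ × (Fin m → ℕ) ≃ (Fin (m+1) → ℕ) where
  toFun z := Fin.cons z.1 z.2
  invFun f := (f 0, fun i => f i.succ)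
  left_inv z := by ext <;> simp
  right_inv f := Fin.cons_self_tail f

private lemma tsum_pi_geom : ∀ (m : ℕ) (x : Fin m → ℂ), (∀ i, ‖x i‖ < 1) →
    Summable (fun f : Fin m → ℕ => ‖∏ i, x i ^ f i‖) ∧
    ∑' f : Fin m → ℕ, ∏ i, x i ^ f i = ∏ i, (1 - x i)⁻¹ := by
  intro m
  induction m with
  | zero =>
    intro x _
    refine ⟨Summable.of_finite, ?_⟩
    have h1 : (fun f : Fin 0 → ℕ => ∏ i, x i ^ f i) = fun _ => (1 : ℂ) := by
      funext f; simp
    rw [h1, tsum_eq_single (default : Fin 0 → ℕ) (fun b hb => absurd (Subsingleton.elim b default) hb)]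
    simp
  | succ m ih =>
    intro x hx
    set y : Fin m → ℂ := fun i => x i.succ with hy
    obtain ⟨ihs, ihe⟩ := ih y (fun i => hx _)
    have h0 : ‖x 0‖ < 1 := hx 0
    have hgeom : Summable (fun k : ℕ => ‖x 0 ^ k‖) := by
      simpa [norm_pow] using summable_geometric_of_lt_one (norm_nonneg (x 0)) h0
    have key : ∀ z : ℕ × (Fin m → ℕ),
        ∏ i, x i ^ ((finConsEquiv m) z) i = x 0 ^ z.1 * ∏ i, y i ^ z.2 i := by
      intro z
      rw [Fin.prod_univ_succ]
      simp [finConsEquiv, hy]; rfl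
    have hs0 : Summable (fun z : ℕ × (Fin m → ℕ) => ‖x 0 ^ z.1 * ∏ i, y i ^ z.2 i‖) :=
      Summable.mul_norm (f := fun k : ℕ => x 0 ^ k)
        (g := fun w : Fin m → ℕ => ∏ i, y i ^ w i) hgeom ihs
    have hs1 : Summable ((fun f : Fin (m+1) → ℕ => ‖∏ i, x i ^ f i‖) ∘ (finConsEquiv m)) :=
      hs0.congr fun z => congrArg norm (key z).symm
    have hsum : Summable (fun f : Fin (m+1) → ℕ => ‖∏ i, x i ^ f i‖) :=
      (finConsEquiv m).summable_iff.1 hs1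
    refine ⟨hsum, ?_⟩
    rw [← (finConsEquiv m).tsum_eq]
    calc ∑' z : ℕ × (Fin m → ℕ), ∏ i, x i ^ ((finConsEquiv m) z) i
        = ∑' z : ℕ × (Fin m → ℕ), x 0 ^ z.1 * ∏ i, y i ^ z.2 i := tsum_congr key
      _ = (∑' k : ℕ, x 0 ^ k) * ∑' g : Fin m → ℕ, ∏ i, y i ^ g i :=
          (tsum_mul_tsum_of_summable_norm hgeom ihs).symm
      _ = (1 - x 0)⁻¹ * ∏ i : Fin m, (1 - y i)⁻¹ := by
          rw [tsum_geometric_of_norm_lt_one h0, ihe]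
      _ = ∏ i : Fin (m+1), (1 - x i)⁻¹ := by rw [Fin.prod_univ_succ]

private def degEquiv (N : ℕ) :
    (Σ k : ℕ, {f : Fin N → ℕ // f ∈ Finset.Nat.antidiagonalTuple N k}) ≃ (Fin N → ℕ) where
  toFun σ := σ.2.1
  invFun f := ⟨∑ i, f i, f, Finset.Nat.mem_antidiagonalTuple.2 rfl⟩
  left_inv := by
    rintro ⟨k, f, hf⟩
    obtain rfl := Finset.Nat.mem_antidiagonalTuple.1 hf
    rfl
  right_inv f := rfl

private lemma tsum_regroup {N : ℕ} (F : (Fin N → ℕ) → ℂ) (hF : Summable (fun f => ‖F f‖)) :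
    Summable (fun k : ℕ => ‖∑ f ∈ Finset.Nat.antidiagonalTuple N k, F f‖) ∧
    ∑' k : ℕ, ∑ f ∈ Finset.Nat.antidiagonalTuple N k, F f = ∑' f, F f := by
  have hF' : Summable F := hF.of_norm
  have hsig : Summable (fun σ : Σ k : ℕ,
      {f : Fin N → ℕ // f ∈ Finset.Nat.antidiagonalTuple N k} => F σ.2) :=
    (degEquiv N).summable_iff.2 hF'
  have hsign : Summable (fun σ : Σ k : ℕ,
      {f : Fin N → ℕ // f ∈ Finset.Nat.antidiagonalTuple N k} => ‖F σ.2‖) :=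
    (degEquiv N).summable_iff.2 hF
  have hfiber : ∀ k : ℕ, ∑' f : {f : Fin N → ℕ // f ∈ Finset.Nat.antidiagonalTuple N k}, F f.1
      = ∑ f ∈ Finset.Nat.antidiagonalTuple N k, F f := fun k =>
    Finset.tsum_subtype (Finset.Nat.antidiagonalTuple N k) F
  constructor
  · refine Summable.of_nonneg_of_le (fun _ => norm_nonneg _) (fun k => ?_) hsign.sigma
    calc ‖∑ f ∈ Finset.Nat.antidiagonalTuple N k, F f‖
        ≤ ∑ f ∈ Finset.Nat.antidiagonalTuple N k, ‖F f‖ := norm_sum_le _ _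
      _ = ∑' f : {f : Fin N → ℕ // f ∈ Finset.Nat.antidiagonalTuple N k}, ‖F f.1‖ :=
          (Finset.tsum_subtype (Finset.Nat.antidiagonalTuple N k) (fun f => ‖F f‖)).symm
  · calc ∑' k : ℕ, ∑ f ∈ Finset.Nat.antidiagonalTuple N k, F f
        = ∑' k : ℕ, ∑' f : {f : Fin N → ℕ // f ∈ Finset.Nat.antidiagonalTuple N k}, F f.1 :=
          tsum_congr fun k => (hfiber k).symm
      _ = ∑' σ : Σ k : ℕ, {f : Fin N → ℕ // f ∈ Finset.Nat.antidiagonalTuple N k}, F σ.2 :=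
          (Summable.tsum_sigma hsig).symm
      _ = ∑' f, F f := (degEquiv N).tsum_eq F

private lemma hpoly_tsum (n : ℕ) (α : Fin (n+1) → ℂ) (c : ℂ) (hc : ∀ i, ‖α i * c‖ < 1) :
    Summable (fun k : ℕ => ‖(∑ m ∈ Finset.Nat.antidiagonalTuple (n + 1) k, ∏ i, α i ^ m i) * c ^ k‖) ∧
    ∑' k : ℕ, (∑ m ∈ Finset.Nat.antidiagonalTuple (n + 1) k, ∏ i, α i ^ m i) * c ^ k
      = ∏ i, (1 - α i * c)⁻¹ := by
  obtain ⟨hs, he⟩ := tsum_pi_geom (n+1) (fun i => α i * c) hc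
  have hcoef : ∀ k : ℕ, ∑ f ∈ Finset.Nat.antidiagonalTuple (n+1) k, ∏ i, (α i * c) ^ f i
      = (∑ m ∈ Finset.Nat.antidiagonalTuple (n + 1) k, ∏ i, α i ^ m i) * c ^ k := by
    intro k
    rw [Finset.sum_mul]
    refine Finset.sum_congr rfl (fun f hf => ?_)
    obtain rfl := Finset.Nat.mem_antidiagonalTuple.1 hf
    simp only [mul_pow, Finset.prod_mul_distrib, Finset.prod_pow_eq_pow_sum]
  obtain ⟨hs2, he2⟩ := tsum_regroup (fun f => ∏ i, (α i * c) ^ f i) hs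
  constructor
  · refine hs2.congr fun k => ?_
    rw [hcoef k]
  · calc ∑' k : ℕ, (∑ m ∈ Finset.Nat.antidiagonalTuple (n + 1) k, ∏ i, α i ^ m i) * c ^ k
        = ∑' k : ℕ, ∑ f ∈ Finset.Nat.antidiagonalTuple (n+1) k, ∏ i, (α i * c) ^ f i :=
          tsum_congr fun k => (hcoef k).symm
      _ = ∑' f : Fin (n+1) → ℕ, ∏ i, (α i * c) ^ f i := he2
      _ = ∏ i, (1 - α i * c)⁻¹ := he

/-- Theorem 5.1 of the paper: if `W` takes the values of the Whittaker
function of a newform (normalized by `W(1) = 1`) on `t(ℚ_pˣ)`, i.e.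
`W(t(p^k)) = p^{−k(n−1)/2} h_k(α)` for `k ≥ 0`, `W(t(p^k)) = 0` for `k < 0`, and
`W(t(au)) = W(t(a))` for `u ∈ ℤ_pˣ`, and if `μ` is a Haar measure on `ℚ_pˣ` with
`μ(ℤ_pˣ) = 1`, then for every real `s` with `|α_i| < p^s` for all `i`, the zeta
integrand `a ↦ W(t(a))·|a|_p^{s−(n−1)/2}` is `μ`-integrable on `ℚ_pˣ` with integral
`∏_{i=1}^n (1 − α_i p^{−s})⁻¹`. -/
theorem zeta_integral_eq_L_factor
    (p : ℕ) [Fact p.Prime] (n : ℕ) (hn : 1 ≤ n)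
    (α : Fin (n + 1) → ℂ)
    (W : Matrix (Fin (n + 1)) (Fin (n + 1)) ℚ_[p] → ℂ)
    (hW1 : ∀ k : ℕ, W (tMat p n ((p : ℚ_[p]) ^ (k : ℤ))) =
      (((p : ℝ) ^ (-((k : ℝ) * (n : ℝ)) / 2) : ℝ) : ℂ) * hpoly n k α)
    (hW2 : ∀ k : ℤ, k < 0 → W (tMat p n ((p : ℚ_[p]) ^ k)) = 0)
    (hW3 : ∀ a u : ℚ_[p], a ≠ 0 → ‖u‖ = 1 → W (tMat p n (a * u)) = W (tMat p n a))
    (μ : Measure ℚ_[p]ˣ) (hHaar : μ.IsHaarMeasure)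
    (hnorm : μ {x : ℚ_[p]ˣ | ‖(x : ℚ_[p])‖ = 1} = 1)
    (s : ℝ) (hs : ∀ i, ‖α i‖ < (p : ℝ) ^ s) :
    Integrable (fun a : ℚ_[p]ˣ =>
        W (tMat p n (a : ℚ_[p])) * ((‖(a : ℚ_[p])‖ ^ (s - (n : ℝ) / 2) : ℝ) : ℂ)) μ ∧
      ∫ a : ℚ_[p]ˣ,
          W (tMat p n (a : ℚ_[p])) * ((‖(a : ℚ_[p])‖ ^ (s - (n : ℝ) / 2) : ℝ) : ℂ) ∂μ =
        ∏ i, (1 - α i * (((p : ℝ) ^ (-s) : ℝ) : ℂ))⁻¹ := by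
  classical
  haveI : BorelSpace ℚ_[p]ˣ := ⟨rfl⟩
  haveI := hHaar.toIsMulLeftInvariant
  haveI : MeasurableMul ℚ_[p]ˣ :=
    ⟨fun c => (continuous_mul_left c).measurable, fun c => (continuous_mul_right c).measurable⟩
  have hple : (1:ℝ) < (p:ℝ) := by exact_mod_cast (Fact.out : p.Prime).one_lt
  have hp0 : (0:ℝ) < (p:ℝ) := lt_trans one_pos hple
  have hpQ : (p : ℚ_[p]) ≠ 0 := by
    exact_mod_cast (Nat.cast_ne_zero (R := ℚ_[p])).2 (Fact.out : p.Prime).ne_zero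
  set c : ℂ := (((p:ℝ) ^ (-s) : ℝ) : ℂ) with hc_def
  -- norms of α i * c
  have hcnorm : ∀ i, ‖α i * c‖ < 1 := by
    intro i
    have hps : (0:ℝ) < (p:ℝ) ^ s := Real.rpow_pos_of_pos hp0 s
    have h1 : ‖c‖ = ((p:ℝ) ^ s)⁻¹ := by
      rw [hc_def, Complex.norm_real, Real.norm_eq_abs,
        abs_of_pos (Real.rpow_pos_of_pos hp0 _), Real.rpow_neg hp0.le]
    have h2 : ‖α i‖ < (p:ℝ) ^ s := by exact hs i
    calc ‖α i * c‖ = ‖α i‖ * ((p:ℝ) ^ s)⁻¹ := by rw [norm_mul, h1]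
      _ < (p:ℝ) ^ s * ((p:ℝ) ^ s)⁻¹ := by
          exact mul_lt_mul_of_pos_right h2 (inv_pos.2 hps)
      _ = 1 := mul_inv_cancel₀ hps.ne'
  -- the valuation map and the shells
  set v : ℚ_[p]ˣ → ℤ := fun a => (a : ℚ_[p]).valuation with hv_def
  set S : ℤ → Set ℚ_[p]ˣ := fun k => {a : ℚ_[p]ˣ | ‖(a : ℚ_[p])‖ = (p:ℝ) ^ (-k)} with hS_def
  have hval_iff : ∀ (a : ℚ_[p]ˣ) (k : ℤ), v a = k ↔ ‖(a:ℚ_[p])‖ = (p:ℝ) ^ (-k) := by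
    intro a k
    rw [Padic.norm_eq_zpow_neg_valuation a.ne_zero]
    constructor
    · rintro rfl; rfl
    · intro h
      have h2 : -(a:ℚ_[p]).valuation = -k := zpow_right_injective₀ hp0 (ne_of_gt hple) h
      simp only [hv_def]
      omega
  have hcont : Continuous fun a : ℚ_[p]ˣ => ‖(a:ℚ_[p])‖ :=
    continuous_norm.comp Units.continuous_val
  have hSmeas : ∀ k, MeasurableSet (S k) := by
    intro k
    have : S k = (fun a : ℚ_[p]ˣ => ‖(a:ℚ_[p])‖) ⁻¹' {(p:ℝ) ^ (-k)} := rfl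
    rw [this]
    exact (isClosed_singleton.preimage hcont).measurableSet
  have hvmeas : Measurable v := by
    apply measurable_to_countable'
    intro k
    have : v ⁻¹' {k} = S k := by
      ext a
      simp only [Set.mem_preimage, Set.mem_singleton_iff, hS_def, Set.mem_setOf_eq]
      exact hval_iff a k
    rw [this]; exact hSmeas k
  -- every shell has measure one
  have hS1 : ∀ k, μ (S k) = 1 := by
    intro k
    have hu : ((p:ℚ_[p]) ^ (-k)) ≠ 0 := zpow_ne_zero _ hpQ
    have hSpre : S k = (fun x => Units.mk0 ((p:ℚ_[p]) ^ (-k)) hu * x) ⁻¹' (S 0) := by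
      ext a
      simp only [hS_def, Set.mem_preimage, Set.mem_setOf_eq, Units.val_mul, norm_mul]
      rw [show ((Units.mk0 ((p:ℚ_[p]) ^ (-k)) hu : ℚ_[p]ˣ) : ℚ_[p]) = (p:ℚ_[p]) ^ (-k) from rfl,
        Padic.norm_p_zpow, neg_neg, neg_zero, zpow_zero]
      constructor
      · intro h
        rw [h, ← zpow_add₀ (ne_of_gt hp0)]
        simp
      · intro h
        have h2 := congrArg (fun r => ((p:ℝ)^(k:ℤ))⁻¹ * r) h
        simp only [mul_one] at h2
        rw [← mul_assoc, ← zpow_neg, ← zpow_add₀ (ne_of_gt hp0)] at h2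
        simpa using h2
    rw [hSpre, measure_preimage_mul]
    have : S 0 = {x : ℚ_[p]ˣ | ‖(x : ℚ_[p])‖ = 1} := by
      ext a; simp [hS_def]
    rw [this, hnorm]
  -- the pushforward of μ under v is the counting measure
  have hmap : μ.map v = Measure.count := by
    refine Measure.ext fun A hA => ?_
    rw [Measure.map_apply hvmeas hA, Measure.count_apply hA]
    have hpre : v ⁻¹' A = ⋃ k : A, S (k:ℤ) := by
      ext a
      simp only [Set.mem_preimage, Set.mem_iUnion]
      constructor
      · intro h; exact ⟨⟨v a, h⟩, (hval_iff a _).1 rfl⟩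
      · rintro ⟨⟨k, hk⟩, hak⟩
        have : v a = k := (hval_iff a k).2 hak
        rwa [this]
    have hdisj : Pairwise (Function.onFun Disjoint (fun k : A => S (k:ℤ))) := by
      intro i j hij
      rw [Function.onFun, Set.disjoint_left]
      intro a hai haj
      apply hij
      have : ((i:ℤ)) = ((j:ℤ)) := by
        have h1 : v a = (i:ℤ) := (hval_iff a _).2 hai
        have h2 : v a = (j:ℤ) := (hval_iff a _).2 haj
        omega
      exact Subtype.ext this
    rw [hpre, measure_iUnion hdisj (fun k => hSmeas _)]
    rw [tsum_congr fun k => hS1 _]; exact ENNReal.tsum_one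
  -- the function G on ℤ
  set G : ℤ → ℂ := fun k => W (tMat p n ((p : ℚ_[p]) ^ k)) *
      ((((p:ℝ) ^ (-k) : ℝ) ^ (s - (n:ℝ)/2) : ℝ) : ℂ) with hG_def
  have hfeq : ∀ a : ℚ_[p]ˣ,
      W (tMat p n (a : ℚ_[p])) * ((‖(a : ℚ_[p])‖ ^ (s - (n:ℝ)/2) : ℝ) : ℂ) = G (v a) := by
    intro a
    have hnorm_a : ‖(a:ℚ_[p])‖ = (p:ℝ) ^ (-(v a)) := (hval_iff a _).1 rfl
    have hWa : W (tMat p n (a : ℚ_[p])) = W (tMat p n ((p:ℚ_[p]) ^ (v a))) := by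
      have hu : ‖(p:ℚ_[p])^(-(v a)) * (a:ℚ_[p])‖ = 1 := by
        rw [norm_mul, Padic.norm_p_zpow, neg_neg, hnorm_a,
          ← zpow_add₀ (ne_of_gt hp0), add_neg_cancel, zpow_zero]
      have h3 := hW3 ((p:ℚ_[p])^(v a)) ((p:ℚ_[p])^(-(v a)) * (a:ℚ_[p]))
        (zpow_ne_zero _ hpQ) hu
      rw [show (p:ℚ_[p])^(v a) * ((p:ℚ_[p])^(-(v a)) * (a:ℚ_[p])) = (a:ℚ_[p]) by
        rw [← mul_assoc, ← zpow_add₀ hpQ, add_neg_cancel, zpow_zero, one_mul]] at h3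
      exact h3
    rw [hG_def, hWa, hnorm_a]
  -- values of G
  have hGnat : ∀ m : ℕ, G (m:ℤ) = hpoly n m α * c ^ m := by
    intro m
    have hreal : ((p:ℝ) ^ (-((m:ℝ)*(n:ℝ))/2)) * (((p:ℝ)^(-(m:ℤ)) : ℝ) ^ (s - (n:ℝ)/2))
        = ((p:ℝ)^(-s))^m := by
      rw [show ((p:ℝ)^(-(m:ℤ)) : ℝ) = (p:ℝ) ^ ((-(m:ℤ) : ℤ) : ℝ) from
        (Real.rpow_intCast _ _).symm]
      rw [← Real.rpow_natCast ((p:ℝ) ^ (-s)) m, ← Real.rpow_mul hp0.le,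
        ← Real.rpow_mul hp0.le, ← Real.rpow_add hp0]
      congr 1
      push_cast
      ring
    rw [hG_def]
    simp only []
    rw [hW1 m, hc_def, ← Complex.ofReal_pow, ← hreal]
    push_cast
    ring
  have hGneg : ∀ k : ℤ, k < 0 → G k = 0 := by
    intro k hk
    rw [hG_def]
    simp only []
    rw [hW2 k hk, zero_mul]
  -- summability
  obtain ⟨hsumN, htsumN⟩ := hpoly_tsum n α c hcnorm
  have hsumN' : Summable (fun m : ℕ => ‖G (m:ℤ)‖) := by
    refine hsumN.congr fun m => ?_
    rw [hGnat m, hpoly]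
  have hsupp : ∀ k : ℤ, k ∉ Set.range (fun m : ℕ => (m:ℤ)) → G k = 0 := by
    intro k hk
    apply hGneg
    by_contra h
    push_neg at h
    exact hk ⟨k.toNat, by simpa using Int.toNat_of_nonneg h⟩
  have hinj : Function.Injective (fun m : ℕ => (m:ℤ)) := fun a b h => by simpa using h
  have hGsumZ : Summable (fun k : ℤ => ‖G k‖) := by
    refine (Function.Injective.summable_iff hinj ?_).1 ?_
    · intro k hk; rw [hsupp k hk, norm_zero]
    · exact hsumN'
  have hGint : Integrable G Measure.count := integrable_count_iff.mpr hGsumZ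
  have hGmeas : AEStronglyMeasurable G (μ.map v) :=
    (measurable_from_top (f := G)).aestronglyMeasurable
  have hint : Integrable (fun a : ℚ_[p]ˣ => G (v a)) μ := by
    have h1 : Integrable G (μ.map v) := by rw [hmap]; exact hGint
    exact (integrable_map_measure hGmeas hvmeas.aemeasurable).1 h1
  have hfun : (fun a : ℚ_[p]ˣ =>
      W (tMat p n (a : ℚ_[p])) * ((‖(a : ℚ_[p])‖ ^ (s - (n:ℝ)/2) : ℝ) : ℂ)) =
      fun a => G (v a) := funext hfeq
  constructor
  · rw [hfun]; exact hint
  · calc ∫ a : ℚ_[p]ˣ, W (tMat p n (a : ℚ_[p])) *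
          ((‖(a : ℚ_[p])‖ ^ (s - (n:ℝ)/2) : ℝ) : ℂ) ∂μ
        = ∫ a : ℚ_[p]ˣ, G (v a) ∂μ := by rw [hfun]
      _ = ∫ k : ℤ, G k ∂(μ.map v) := (integral_map hvmeas.aemeasurable hGmeas).symm
      _ = ∫ k : ℤ, G k ∂(Measure.count) := by rw [hmap]
      _ = ∑' k : ℤ, (Measure.count {k}).toReal • G k := integral_countable' hGint
      _ = ∑' k : ℤ, G k := by
          refine tsum_congr fun k => ?_
          rw [Measure.count_singleton, ENNReal.toReal_one, one_smul]
      _ = ∑' m : ℕ, G (m:ℤ) :=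
          (Function.Injective.tsum_eq hinj (Function.support_subset_iff'.2 hsupp)).symm
      _ = ∑' m : ℕ, hpoly n m α * c ^ m := tsum_congr hGnat
      _ = ∏ i, (1 - α i * c)⁻¹ := by
          rw [show (fun m : ℕ => hpoly n m α * c ^ m) = fun m : ℕ =>
            (∑ f ∈ Finset.Nat.antidiagonalTuple (n + 1) m, ∏ i, α i ^ f i) * c ^ m from rfl]
          exact htsumN
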